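/- Let Δ ⊂ ℝ² be a (nondegenerate) triangle. Then the minimum of λ > 0 such that -λΔ cannot be translated into the interior of Δ equals 1/2. Equivalently: for every λ < 1/2 there exists t ∈ ℝ² with -λΔ + t ⊆ interior(Δ), and for λ = 1/2 no translate of -λΔ lies in the interior of Δ. -/
import Mathlib
open Set

lemma aff_comp (f : (ℝ × ℝ) →ᵃ[ℝ] ℝ) (lam : ℝ) (x t : ℝ × ℝ) :
    f (-lam • x + t) = -lam * (f x - f 0) + f t := by
  have hlin : ∀ v : ℝ × ℝ, f.linear v = f v - f 0 := by
    intro v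
    have := f.map_vadd 0 v
    simp at this
    simp [this]
  have h2 := f.map_vadd t (-lam • x)
  simp only [vadd_eq_add, neg_smul] at h2 ⊢
  rw [h2, map_neg, map_smul, hlin]
  simp

lemma aff_comb (f : (ℝ × ℝ) →ᵃ[ℝ] ℝ) (c₁ c₂ c₃ : ℝ) (x₁ x₂ x₃ : ℝ × ℝ) :
    f (c₁ • x₁ + c₂ • x₂ + c₃ • x₃) =
      c₁ * (f x₁ - f 0) + c₂ * (f x₂ - f 0) + c₃ * (f x₃ - f 0) + f 0 := by
  have hlin : ∀ v : ℝ × ℝ, f.linear v = f v - f 0 := by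
    intro v
    have := f.map_vadd 0 v
    simp at this
    simp [this]
  have h2 := f.map_vadd 0 (c₁ • x₁ + c₂ • x₂ + c₃ • x₃)
  simp only [vadd_eq_add, add_zero] at h2
  rw [h2, map_add, map_add, map_smul, map_smul, map_smul, hlin, hlin, hlin]
  simp [smul_eq_mul]

noncomputable def negSmulAdd (lam : ℝ) (t : ℝ × ℝ) : (ℝ × ℝ) →ᵃ[ℝ] (ℝ × ℝ) where
  toFun := fun p => -lam • p + t
  linear := -lam • LinearMap.id
  map_vadd' := by
    intro p v
    simp only [vadd_eq_add, LinearMap.smul_apply, LinearMap.id_coe, id_eq, smul_add]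
    module

/-- For a nondegenerate triangle `Δ ⊂ ℝ²`: for every `0 < λ < 1/2` the set `-λΔ`
can be translated into the interior of `Δ`, while for `λ = 1/2` no translate of
`-λΔ` lies in the interior of `Δ`; i.e. the minimal `λ` with `-λΔ` not
translatable into `int Δ` equals `1/2`. -/
theorem min_scaling_neg_triangle_in_triangle (v₁ v₂ v₃ : ℝ × ℝ)
    (h : AffineIndependent ℝ ![v₁, v₂, v₃]) :
    (∀ lam : ℝ, 0 < lam → lam < 1/2 →
      ∃ t : ℝ × ℝ, (fun p => -lam • p + t) '' (convexHull ℝ {v₁, v₂, v₃}) ⊆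
        interior (convexHull ℝ {v₁, v₂, v₃})) ∧
    ¬ ∃ t : ℝ × ℝ, (fun p => -(1/2 : ℝ) • p + t) '' (convexHull ℝ {v₁, v₂, v₃}) ⊆
        interior (convexHull ℝ {v₁, v₂, v₃}) := by
  have htop : affineSpan ℝ (Set.range ![v₁, v₂, v₃]) = ⊤ := by
    rw [h.affineSpan_eq_top_iff_card_eq_finrank_add_one]
    simp
  set b : AffineBasis (Fin 3) ℝ (ℝ × ℝ) := ⟨![v₁, v₂, v₃], h, htop⟩ with hb
  have hb0 : b 0 = v₁ := rfl
  have hb1 : b 1 = v₂ := rfl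
  have hb2 : b 2 = v₃ := rfl
  have hrange : Set.range ⇑b = ({v₁, v₂, v₃} : Set (ℝ × ℝ)) := by
    show Set.range ![v₁, v₂, v₃] = _
    ext x
    simp [Matrix.range_cons, Matrix.range_empty]
    tauto
  have hint : interior (convexHull ℝ ({v₁, v₂, v₃} : Set (ℝ × ℝ)))
      = {x | ∀ i, 0 < b.coord i x} := by
    rw [← hrange, b.interior_convexHull]
  have hcoord : ∀ i j : Fin 3, b.coord i (b j) = if i = j then 1 else 0 :=
    fun i j => b.coord_apply i j
  have hsum1 : ∀ x : ℝ × ℝ, b.coord 0 x + b.coord 1 x + b.coord 2 x = 1 := by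
    intro x
    have := b.sum_coord_apply_eq_one x
    rw [Fin.sum_univ_three] at this
    exact this
  have key : ∀ (lam : ℝ) (j i : Fin 3),
      b.coord i (-lam • (b j) + ((1 + lam)/3) • (b 0 + b 1 + b 2)) =
        (1 + lam)/3 - lam * (if i = j then 1 else 0) := by
    intro lam j i
    have hj : j = 0 ∨ j = 1 ∨ j = 2 := by omega
    rcases hj with rfl | rfl | rfl
    · have e : -lam • (b 0) + ((1 + lam)/3) • (b 0 + b 1 + b 2)
          = ((1 + lam)/3 - lam) • b 0 + ((1 + lam)/3) • b 1 + ((1 + lam)/3) • b 2 := by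
        module
      rw [e, aff_comb, hcoord i 0, hcoord i 1, hcoord i 2]
      fin_cases i <;> simp <;> ring
    · have e : -lam • (b 1) + ((1 + lam)/3) • (b 0 + b 1 + b 2)
          = ((1 + lam)/3) • b 0 + ((1 + lam)/3 - lam) • b 1 + ((1 + lam)/3) • b 2 := by
        module
      rw [e, aff_comb, hcoord i 0, hcoord i 1, hcoord i 2]
      fin_cases i <;> simp <;> ring
    · have e : -lam • (b 2) + ((1 + lam)/3) • (b 0 + b 1 + b 2)
          = ((1 + lam)/3) • b 0 + ((1 + lam)/3) • b 1 + ((1 + lam)/3 - lam) • b 2 := by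
        module
      rw [e, aff_comb, hcoord i 0, hcoord i 1, hcoord i 2]
      fin_cases i <;> simp <;> ring
  constructor
  · intro lam hl0 hl2
    set t : ℝ × ℝ := ((1 + lam)/3) • (v₁ + v₂ + v₃) with ht
    refine ⟨t, ?_⟩
    rw [Set.image_subset_iff]
    have hconv : Convex ℝ ((fun p => -lam • p + t) ⁻¹'
        interior (convexHull ℝ ({v₁, v₂, v₃} : Set (ℝ × ℝ)))) :=
      ((convex_convexHull ℝ _).interior).affine_preimage (negSmulAdd lam t)
    apply convexHull_min ?_ hconv
    intro x hx
    have hx' : ∃ j : Fin 3, b j = x := by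
      rcases hx with rfl | rfl | rfl
      exacts [⟨0, rfl⟩, ⟨1, rfl⟩, ⟨2, rfl⟩]
    obtain ⟨j, rfl⟩ := hx'
    simp only [Set.mem_preimage]
    rw [hint]
    intro i
    have hk := key lam j i
    rw [hb0, hb1, hb2] at hk
    rw [← ht] at hk
    rw [hk]
    split_ifs <;> linarith
  · rintro ⟨t, ht⟩
    have hv : ∀ j : Fin 3, ∀ i : Fin 3, 0 < b.coord i (-(1/2 : ℝ) • (b j) + t) := by
      intro j i
      have hmem : b j ∈ convexHull ℝ ({v₁, v₂, v₃} : Set (ℝ × ℝ)) := by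
        apply subset_convexHull
        fin_cases j <;> simp [hb0, hb1, hb2]
      have := ht ⟨b j, hmem, rfl⟩
      rw [hint] at this
      exact this i
    have hform : ∀ j : Fin 3, b.coord j (-(1/2 : ℝ) • (b j) + t)
        = -(1/2) * (1 - b.coord j 0) + b.coord j t := by
      intro j
      rw [aff_comp, hcoord j j]
      simp
    have h0 := hv 0 0
    have h1 := hv 1 1
    have h2 := hv 2 2
    rw [hform 0] at h0
    rw [hform 1] at h1
    rw [hform 2] at h2
    have s1 := hsum1 t
    have s2 := hsum1 0
    linarith
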